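/- arXiv:1010.3047 — 3 statements merged into one kernel-verified Lean document; each statement's English description precedes it below -/
import Mathlib

section
/- Let 0 < H < 1/2 and define μ_R((a,b]×(c,d]) := ½(|d−a|^{2H} + |c−b|^{2H} − |d−b|^{2H} − |c−a|^{2H}) for 0 ≤ a ≤ b and 0 ≤ c ≤ d. Then for any intervals (a,b], (c,d] ⊂ [0,T], one has |μ_R((a,b]×(c,d])| ≤ min((b−a)^{2H}, (d−c)^{2H}). -/
/-- The rectangular increment of the fBm covariance kernel. -/
noncomputable def muR (H a b c d : ℝ) : ℝ :=
  (1/2) * (|d - a| ^ (2*H) + |c - b| ^ (2*H) - |d - b| ^ (2*H) - |c - a| ^ (2*H))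

private lemma rpow_subadd {α : ℝ} (hα0 : 0 ≤ α) (hα1 : α ≤ 1) {x y : ℝ}
    (hx : 0 ≤ x) (hy : 0 ≤ y) : (x + y) ^ α ≤ x ^ α + y ^ α := by
  have h := NNReal.rpow_add_le_add_rpow x.toNNReal y.toNNReal hα0 hα1
  have := (NNReal.coe_le_coe).2 h
  simpa [NNReal.coe_rpow, Real.coe_toNNReal x hx, Real.coe_toNNReal y hy,
    ← Real.toNNReal_add hx hy, max_eq_left (add_nonneg hx hy)] using this

private lemma key {α : ℝ} (hα0 : 0 ≤ α) (hα1 : α ≤ 1) (t a b : ℝ) (hab : a ≤ b) :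
    |(|t - a| ^ α - |t - b| ^ α)| ≤ (b - a) ^ α := by
  have hba : (0:ℝ) ≤ b - a := by linarith
  have h1 : |t - a| ≤ |t - b| + (b - a) := by
    have := abs_sub_abs_le_abs_sub (t - a) (t - b)
    have h2 : |t - a| - |t - b| ≤ |b - a| := by
      calc |t - a| - |t - b| ≤ |(t - a) - (t - b)| := abs_sub_abs_le_abs_sub _ _
        _ = |b - a| := by rw [show (t - a) - (t - b) = b - a from by ring]
    rw [abs_of_nonneg hba] at h2; linarith
  have h1' : |t - b| ≤ |t - a| + (b - a) := by
    have h2 : |t - b| - |t - a| ≤ |a - b| := by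
      calc |t - b| - |t - a| ≤ |(t - b) - (t - a)| := abs_sub_abs_le_abs_sub _ _
        _ = |a - b| := by rw [show (t - b) - (t - a) = a - b from by ring]
    rw [abs_sub_comm a b, abs_of_nonneg hba] at h2; linarith
  rw [abs_le]
  constructor
  · have : |t - b| ^ α ≤ (|t - a| + (b - a)) ^ α :=
      Real.rpow_le_rpow (abs_nonneg _) h1' hα0
    have h3 := rpow_subadd hα0 hα1 (abs_nonneg (t - a)) hba
    linarith
  · have : |t - a| ^ α ≤ (|t - b| + (b - a)) ^ α :=
      Real.rpow_le_rpow (abs_nonneg _) h1 hα0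
    have h3 := rpow_subadd hα0 hα1 (abs_nonneg (t - b)) hba
    linarith

theorem muR_bound (H : ℝ) (hH0 : 0 < H) (hH : H < 1/2) (T : ℝ)
    (a b c d : ℝ) (ha : 0 ≤ a) (hab : a ≤ b) (hbT : b ≤ T)
    (hc : 0 ≤ c) (hcd : c ≤ d) (hdT : d ≤ T) :
    |muR H a b c d| ≤ min ((b - a) ^ (2*H)) ((d - c) ^ (2*H)) := by
  set α := 2 * H with hα
  have hα0 : 0 ≤ α := by positivity
  have hα1 : α ≤ 1 := by rw [hα]; linarith
  have hd := key hα0 hα1 d a b hab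
  have hc' := key hα0 hα1 c a b hab
  have hb := key hα0 hα1 b c d hcd
  have ha' := key hα0 hα1 a c d hcd
  rw [le_min_iff]
  constructor
  · have : |muR H a b c d| ≤ (1/2) * (|(|d - a| ^ α - |d - b| ^ α)| +
        |(|c - a| ^ α - |c - b| ^ α)|) := by
      rw [muR, abs_mul, ← hα]
      have h2 : |(1:ℝ)/2| = 1/2 := by norm_num
      rw [h2]
      gcongr _ * ?_
      calc |(|d - a| ^ α + |c - b| ^ α - |d - b| ^ α - |c - a| ^ α)|
          = |(|d - a| ^ α - |d - b| ^ α) - (|c - a| ^ α - |c - b| ^ α)| := by ring_nf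
        _ ≤ _ := abs_sub _ _
    have hc'' : |(|c - a| ^ α - |c - b| ^ α)| ≤ (b - a) ^ α := hc'
    linarith
  · have : |muR H a b c d| ≤ (1/2) * (|(|b - c| ^ α - |b - d| ^ α)| +
        |(|a - c| ^ α - |a - d| ^ α)|) := by
      rw [muR, abs_mul, ← hα]
      have h2 : |(1:ℝ)/2| = 1/2 := by norm_num
      rw [h2]
      gcongr _ * ?_
      calc |(|d - a| ^ α + |c - b| ^ α - |d - b| ^ α - |c - a| ^ α)|
          = |(|b - c| ^ α - |b - d| ^ α) - (|a - c| ^ α - |a - d| ^ α)| := by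
            rw [abs_sub_comm d a, abs_sub_comm c b, abs_sub_comm d b, abs_sub_comm c a]; ring_nf
        _ ≤ _ := abs_sub _ _
    linarith
end

section
/- Let 0 < H < 1/2, T > 0, r = 1/(2H), and fix a partition {s_0 = 0 < … < s_M = T} and a subinterval (t_{j-1}, t_j] ⊆ [0,T]. Then Σ_{i=1}^{M} |μ_R((s_{i-1},s_i]×(t_{j-1},t_j])|^r ≤ 5(t_j − t_{j-1}), where μ_R is the rectangular increment measure of the fBm covariance R. -/
open Real

/-- Concave increment inequality for `x ^ α`, `0 < α ≤ 1`. -/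
lemma rpow_concave_increment {α : ℝ} (hα0 : 0 < α) (hα1 : α ≤ 1)
    {a b h : ℝ} (ha : 0 ≤ a) (hab : a ≤ b) (hh : 0 ≤ h) :
    (b + h) ^ α + a ^ α ≤ (a + h) ^ α + b ^ α := by
  have hconc := Real.concaveOn_rpow hα0.le hα1
  rcases eq_or_lt_of_le (by linarith : a ≤ b + h) with heq | hlt
  · have hb : b = a := le_antisymm (by linarith) hab
    have hh0 : h = 0 := by linarith
    simp [hb, hh0]
  · set D := b + h - a with hD
    have hDpos : 0 < D := by simp [hD]; linarith
    have ht1 : 0 ≤ (b - a) / D := div_nonneg (by linarith) hDpos.le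
    have ht2 : 0 ≤ h / D := div_nonneg hh hDpos.le
    have hsum : (b - a) / D + h / D = 1 := by
      rw [← add_div, div_eq_iff hDpos.ne', hD]; ring
    have h1 : ((b - a) / D) • a + (h / D) • (b + h) = a + h := by
      rw [smul_eq_mul, smul_eq_mul, div_mul_eq_mul_div, div_mul_eq_mul_div, ← add_div, div_eq_iff hDpos.ne', hD]; ring
    have h2 : (h / D) • a + ((b - a) / D) • (b + h) = b := by
      rw [smul_eq_mul, smul_eq_mul, div_mul_eq_mul_div, div_mul_eq_mul_div, ← add_div, div_eq_iff hDpos.ne', hD]; ring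
    have hA := hconc.2 (Set.mem_Ici.2 ha) (Set.mem_Ici.2 (by linarith : (0:ℝ) ≤ b + h))
      ht1 ht2 hsum
    have hB := hconc.2 (Set.mem_Ici.2 ha) (Set.mem_Ici.2 (by linarith : (0:ℝ) ≤ b + h))
      ht2 ht1 (by linarith)
    rw [h1] at hA
    rw [h2] at hB
    simp only [smul_eq_mul] at hA hB
    have e1 : (b - a) / D * a ^ α + h / D * a ^ α = a ^ α := by
      rw [← add_mul, hsum, one_mul]
    have e2 : (b - a) / D * (b + h) ^ α + h / D * (b + h) ^ α = (b + h) ^ α := by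
      rw [← add_mul, hsum, one_mul]
    linarith

/-- `|u^α - v^α| ≤ |u-v|^α` for nonnegative `u, v` and `0 < α ≤ 1`. -/
lemma abs_rpow_sub_rpow_le {α : ℝ} (hα0 : 0 < α) (hα1 : α ≤ 1)
    {u v : ℝ} (hu : 0 ≤ u) (hv : 0 ≤ v) : |u ^ α - v ^ α| ≤ |u - v| ^ α := by
  wlog hvu : v ≤ u generalizing u v
  · rw [abs_sub_comm, abs_sub_comm u v]; exact this hv hu (by linarith)
  have key := rpow_concave_increment hα0 hα1 (le_refl (0:ℝ)) hv (by linarith : (0:ℝ) ≤ u - v)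
  rw [Real.zero_rpow hα0.ne', add_zero, zero_add] at key
  have h1 : v ^ α ≤ u ^ α := Real.rpow_le_rpow hv hvu hα0.le
  have h2 : (v + (u - v)) = u := by ring
  rw [h2] at key
  rw [abs_of_nonneg (by linarith), abs_of_nonneg (by linarith)]
  linarith

/-- The strip function `φ(x) = |d-x|^α - |c-x|^α`. -/
noncomputable def phiF (α c d x : ℝ) : ℝ := |d - x| ^ α - |c - x| ^ α

/-- The variation function of `φ`. -/
noncomputable def Vfun (α c d x : ℝ) : ℝ :=
  if x ≤ c then phiF α c d x - phiF α c d 0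
  else if x ≤ d then (phiF α c d c - phiF α c d 0) + (phiF α c d c - phiF α c d x)
  else (phiF α c d c - phiF α c d 0) + (phiF α c d c - phiF α c d d)
    + (phiF α c d x - phiF α c d d)

section PhiLemmas

variable {α c d : ℝ}

lemma phi_mono1 (hα0 : 0 < α) (hα1 : α ≤ 1) (hcd : c < d) {x y : ℝ} (hxy : x ≤ y) (hyc : y ≤ c) :
    phiF α c d x ≤ phiF α c d y := by
  have key := rpow_concave_increment hα0 hα1 (by linarith : (0:ℝ) ≤ c - y)
    (by linarith : c - y ≤ d - y) (by linarith : (0:ℝ) ≤ y - x)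
  have e1 : d - y + (y - x) = d - x := by ring
  have e2 : c - y + (y - x) = c - x := by ring
  rw [e1, e2] at key
  simp only [phiF]
  rw [abs_of_nonneg (by linarith : (0:ℝ) ≤ d - x), abs_of_nonneg (by linarith : (0:ℝ) ≤ c - x),
    abs_of_nonneg (by linarith : (0:ℝ) ≤ d - y), abs_of_nonneg (by linarith : (0:ℝ) ≤ c - y)]
  linarith

lemma phi_mono2 (hα0 : 0 < α) (hα1 : α ≤ 1) (hcd : c < d) {x y : ℝ} (hcx : c ≤ x) (hxy : x ≤ y) (hyd : y ≤ d) :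
    phiF α c d y ≤ phiF α c d x := by
  have h1 : (d - y) ^ α ≤ (d - x) ^ α :=
    Real.rpow_le_rpow (by linarith) (by linarith) hα0.le
  have h2 : (x - c) ^ α ≤ (y - c) ^ α :=
    Real.rpow_le_rpow (by linarith) (by linarith) hα0.le
  simp only [phiF]
  rw [abs_of_nonneg (by linarith : (0:ℝ) ≤ d - x), abs_of_nonpos (by linarith : c - x ≤ 0),
    abs_of_nonneg (by linarith : (0:ℝ) ≤ d - y), abs_of_nonpos (by linarith : c - y ≤ 0)]
  have e1 : -(c - x) = x - c := by ring
  have e2 : -(c - y) = y - c := by ring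
  rw [e1, e2]
  linarith

lemma phi_mono3 (hα0 : 0 < α) (hα1 : α ≤ 1) (hcd : c < d) {x y : ℝ} (hdx : d ≤ x) (hxy : x ≤ y) :
    phiF α c d x ≤ phiF α c d y := by
  have key := rpow_concave_increment hα0 hα1 (by linarith : (0:ℝ) ≤ x - d)
    (by linarith : x - d ≤ x - c) (by linarith : (0:ℝ) ≤ y - x)
  have e1 : x - c + (y - x) = y - c := by ring
  have e2 : x - d + (y - x) = y - d := by ring
  rw [e1, e2] at key
  simp only [phiF]
  rw [abs_of_nonpos (by linarith : d - x ≤ 0), abs_of_nonpos (by linarith : c - x ≤ 0),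
    abs_of_nonpos (by linarith : d - y ≤ 0), abs_of_nonpos (by linarith : c - y ≤ 0)]
  have e3 : -(d - x) = x - d := by ring
  have e4 : -(c - x) = x - c := by ring
  have e5 : -(d - y) = y - d := by ring
  have e6 : -(c - y) = y - c := by ring
  rw [e3, e4, e5, e6]
  linarith

lemma phi_abs_le (hα0 : 0 < α) (hα1 : α ≤ 1) (hcd : c < d) (x : ℝ) :
    |phiF α c d x| ≤ (d - c) ^ α := by
  have h1 : |(|d - x|) ^ α - (|c - x|) ^ α| ≤ (abs (|d - x| - |c - x|)) ^ α :=
    abs_rpow_sub_rpow_le hα0 hα1 (abs_nonneg _) (abs_nonneg _)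
  have h2 : abs (|d - x| - |c - x|) ≤ |d - c| := by
    have := abs_abs_sub_abs_le_abs_sub (d - x) (c - x)
    have e : d - x - (c - x) = d - c := by ring
    rwa [e] at this
  have h3 : (abs (|d - x| - |c - x|)) ^ α ≤ |d - c| ^ α :=
    Real.rpow_le_rpow (abs_nonneg _) h2 hα0.le
  have h4 : |d - c| = d - c := abs_of_nonneg (by linarith)
  simp only [phiF]
  calc |(|d - x|) ^ α - (|c - x|) ^ α| ≤ (abs (|d - x| - |c - x|)) ^ α := h1
    _ ≤ |d - c| ^ α := h3
    _ = (d - c) ^ α := by rw [h4]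

lemma pair_bound (hα0 : 0 < α) (hα1 : α ≤ 1) (hcd : c < d) (hc : 0 ≤ c) {x y : ℝ} (hxy : x ≤ y) :
    |phiF α c d y - phiF α c d x| ≤ Vfun α c d y - Vfun α c d x := by
  by_cases hxc : x ≤ c
  · by_cases hyc : y ≤ c
    · -- both in region 1
      have hm := phi_mono1 hα0 hα1 hcd hxy hyc
      simp only [Vfun, if_pos hxc, if_pos hyc]
      rw [abs_of_nonneg (by linarith)]
      linarith
    · push_neg at hyc
      by_cases hyd : y ≤ d
      · -- x in region 1, y in region 2
        have h1 : phiF α c d x ≤ phiF α c d c := phi_mono1 hα0 hα1 hcd hxc le_rfl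
        have h2 : phiF α c d y ≤ phiF α c d c := phi_mono2 hα0 hα1 hcd le_rfl hyc.le hyd
        simp only [Vfun, if_pos hxc, if_neg (not_le.2 hyc), if_pos hyd]
        rw [abs_le]
        constructor <;> linarith
      · -- x in region 1, y in region 3
        push_neg at hyd
        have h1 : phiF α c d x ≤ phiF α c d c := phi_mono1 hα0 hα1 hcd hxc le_rfl
        have h2 : phiF α c d d ≤ phiF α c d c := phi_mono2 hα0 hα1 hcd le_rfl hcd.le le_rfl
        have h3 : phiF α c d d ≤ phiF α c d y := phi_mono3 hα0 hα1 hcd le_rfl hyd.le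
        simp only [Vfun, if_pos hxc, if_neg (not_le.2 hyc), if_neg (not_le.2 hyd)]
        rw [abs_le]
        constructor <;> linarith
  · push_neg at hxc
    by_cases hxd : x ≤ d
    · by_cases hyd : y ≤ d
      · -- both in region 2
        have hm := phi_mono2 hα0 hα1 hcd hxc.le hxy hyd
        simp only [Vfun, if_neg (not_le.2 hxc), if_pos hxd,
          if_neg (not_le.2 (lt_of_lt_of_le hxc hxy)), if_pos hyd]
        rw [abs_of_nonpos (by linarith)]
        linarith
      · -- x in region 2, y in region 3
        push_neg at hyd
        have h1 : phiF α c d d ≤ phiF α c d x := phi_mono2 hα0 hα1 hcd hxc.le hxd le_rfl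
        have h2 : phiF α c d d ≤ phiF α c d y := phi_mono3 hα0 hα1 hcd le_rfl hyd.le
        simp only [Vfun, if_neg (not_le.2 hxc), if_pos hxd,
          if_neg (not_le.2 (lt_of_lt_of_le hxc hxy)), if_neg (not_le.2 hyd)]
        rw [abs_le]
        constructor <;> linarith
    · -- both in region 3
      push_neg at hxd
      have hm := phi_mono3 hα0 hα1 hcd hxd.le hxy
      have hyc : ¬ y ≤ c := not_le.2 (lt_of_lt_of_le hxc hxy)
      have hyd : ¬ y ≤ d := not_le.2 (lt_of_lt_of_le hxd hxy)
      simp only [Vfun, if_neg (not_le.2 hxc), if_neg (not_le.2 hxd), if_neg hyc, if_neg hyd]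
      rw [abs_of_nonneg (by linarith)]
      linarith

end PhiLemmas

/-- Telescoping sum over `Fin`. -/
lemma fin_telescope {M : ℕ} (f : Fin (M+1) → ℝ) :
    ∑ i : Fin M, (f i.succ - f i.castSucc) = f (Fin.last M) - f 0 := by
  induction M with
  | zero => simp
  | succ n ih =>
    rw [Fin.sum_univ_castSucc]
    have : ∑ i : Fin n, (f (i.castSucc.succ) - f (i.castSucc.castSucc)) =
        ∑ i : Fin n, ((f ∘ Fin.castSucc) i.succ - (f ∘ Fin.castSucc) i.castSucc) := by
      apply Finset.sum_congr rfl
      intro i _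
      simp only [Function.comp_apply, Fin.succ_castSucc]
    rw [this, ih (f ∘ Fin.castSucc)]
    simp only [Function.comp, Fin.succ_last, Fin.castSucc_zero]
    ring

theorem strip_sum_bound (H T : ℝ) (hH0 : 0 < H) (hH : H < 1/2) (hT : 0 < T)
    (r : ℝ) (hr : r = 1/(2*H))
    (M : ℕ) (s : Fin (M+1) → ℝ)
    (hs : StrictMono s) (hs0 : s 0 = 0) (hsM : s (Fin.last M) = T)
    (c d : ℝ) (hc : 0 ≤ c) (hcd : c < d) (hdT : d ≤ T) :
    ∑ i : Fin M, |muR H (s i.castSucc) (s i.succ) c d| ^ r ≤ 5 * (d - c) := by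
  set α := 2*H with hαdef
  have hα0 : 0 < α := by rw [hαdef]; linarith
  have hα1 : α < 1 := by rw [hαdef]; linarith
  have hdc : 0 < d - c := by linarith
  have hK1 : 0 < (d - c) ^ α := Real.rpow_pos_of_pos hdc α
  have hr1 : 1 < r := by
    rw [hr, lt_div_iff₀ (by linarith : (0:ℝ) < 2*H)]
    linarith [hαdef ▸ hα1]
  have hαr : α * r = 1 := by
    rw [hr, hαdef]
    field_simp
  have hmu : ∀ a b : ℝ, muR H a b c d = (1/2) * (phiF α c d a - phiF α c d b) := by
    intro a b
    simp only [muR, phiF, hαdef]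
    ring
  -- per-term bound
  have habs : ∀ a b : ℝ, |muR H a b c d| ≤ (d - c) ^ α := by
    intro a b
    rw [hmu, abs_mul]
    have h1 := phi_abs_le hα0 hα1.le hcd a
    have h2 := phi_abs_le hα0 hα1.le hcd b
    have h3 : |phiF α c d a - phiF α c d b| ≤ |phiF α c d a| + |phiF α c d b| :=
      abs_sub _ _
    have h4 : |(1:ℝ)/2| = 1/2 := by norm_num
    rw [h4]
    nlinarith [abs_nonneg (phiF α c d a - phiF α c d b)]
  -- power bound
  have hpow : ∀ a : ℝ, 0 ≤ a → a ≤ (d - c) ^ α → a ^ r ≤ ((d - c) ^ α) ^ (r - 1) * a := by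
    intro a ha hle
    rcases eq_or_lt_of_le ha with h0 | h0
    · rw [← h0, Real.zero_rpow (by linarith : r ≠ 0)]
      simp
    · have e : a ^ r = a ^ (r - 1) * a := by
        have h := (Real.rpow_add h0 (r - 1) 1).symm
        rw [Real.rpow_one] at h
        rw [h]
        norm_num
      rw [e]
      exact mul_le_mul_of_nonneg_right
        (Real.rpow_le_rpow h0.le hle (by linarith)) ha
  have hmono : Monotone s := hs.monotone
  -- telescoping bound on sum of |mu|
  have hsum1 : ∑ i : Fin M, |muR H (s i.castSucc) (s i.succ) c d| ≤ 2 * (d - c) ^ α := by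
    have step : ∀ i : Fin M, |muR H (s i.castSucc) (s i.succ) c d| ≤
        (1/2) * (Vfun α c d (s i.succ) - Vfun α c d (s i.castSucc)) := by
      intro i
      rw [hmu, abs_mul]
      have hxy : s i.castSucc ≤ s i.succ := hmono (Fin.castSucc_le_succ i)
      have hpb := pair_bound hα0 hα1.le hcd hc hxy
      rw [abs_sub_comm] at hpb
      have h4 : |(1:ℝ)/2| = 1/2 := by norm_num
      rw [h4]
      linarith
    have hphic : phiF α c d c = (d - c) ^ α := by
      simp only [phiF, sub_self, abs_zero, Real.zero_rpow hα0.ne', sub_zero]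
      rw [abs_of_nonneg hdc.le]
    have hphid : phiF α c d d = -((d - c) ^ α) := by
      simp only [phiF, sub_self, abs_zero, Real.zero_rpow hα0.ne', zero_sub]
      rw [abs_of_nonpos (by linarith : c - d ≤ 0)]
      congr 1
      rw [neg_sub]
    have hphi0 : 0 ≤ phiF α c d 0 := by
      simp only [phiF, sub_zero]
      rw [abs_of_nonneg (by linarith : (0:ℝ) ≤ d), abs_of_nonneg hc]
      have := Real.rpow_le_rpow hc (by linarith : c ≤ d) hα0.le
      linarith
    have hV0 : Vfun α c d (s 0) = 0 := by
      rw [hs0]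
      simp only [Vfun, if_pos hc]
      ring
    have hVT : Vfun α c d (s (Fin.last M)) ≤ 4 * (d - c) ^ α := by
      rw [hsM]
      have hTc : ¬ T ≤ c := not_le.2 (by linarith)
      by_cases hTd : T ≤ d
      · have hTd' : T = d := le_antisymm hTd hdT
        simp only [Vfun, if_neg hTc, if_pos hTd]
        rw [hTd', hphic, hphid]
        linarith
      · have hphiT : phiF α c d T ≤ 0 := by
          push_neg at hTd
          simp only [phiF]
          rw [abs_of_nonpos (by linarith : d - T ≤ 0),
            abs_of_nonpos (by linarith : c - T ≤ 0)]
          have : (-(d - T)) ^ α ≤ (-(c - T)) ^ α :=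
            Real.rpow_le_rpow (by linarith) (by linarith) hα0.le
          linarith
        simp only [Vfun, if_neg hTc, if_neg hTd]
        rw [hphic, hphid]
        linarith
    calc ∑ i : Fin M, |muR H (s i.castSucc) (s i.succ) c d|
        ≤ ∑ i : Fin M, (1/2) * (Vfun α c d (s i.succ) - Vfun α c d (s i.castSucc)) :=
          Finset.sum_le_sum fun i _ => step i
      _ = (1/2) * (Vfun α c d (s (Fin.last M)) - Vfun α c d (s 0)) := by
          rw [← Finset.mul_sum, fin_telescope (fun j => Vfun α c d (s j))]
      _ ≤ 2 * (d - c) ^ α := by rw [hV0]; linarith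
  -- assemble
  calc ∑ i : Fin M, |muR H (s i.castSucc) (s i.succ) c d| ^ r
      ≤ ∑ i : Fin M, ((d - c) ^ α) ^ (r - 1) * |muR H (s i.castSucc) (s i.succ) c d| :=
        Finset.sum_le_sum fun i _ => hpow _ (abs_nonneg _) (habs _ _)
    _ = ((d - c) ^ α) ^ (r - 1) * ∑ i : Fin M, |muR H (s i.castSucc) (s i.succ) c d| := by
        rw [Finset.mul_sum]
    _ ≤ ((d - c) ^ α) ^ (r - 1) * (2 * (d - c) ^ α) :=
        mul_le_mul_of_nonneg_left hsum1 (Real.rpow_nonneg hK1.le _)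
    _ = 2 * ((d - c) ^ α) ^ r := by
        rw [show ((d - c) ^ α) ^ (r - 1) * (2 * (d - c) ^ α)
            = 2 * (((d - c) ^ α) ^ (r - 1) * ((d - c) ^ α) ^ (1:ℝ)) from by
          rw [Real.rpow_one]; ring]
        rw [← Real.rpow_add hK1, sub_add_cancel]
    _ = 2 * (d - c) := by
        rw [← Real.rpow_mul hdc.le, hαr, Real.rpow_one]
    _ ≤ 5 * (d - c) := by linarith
end

section
/- Let X be a separable real Banach space and L a collection of bounded linear functionals on X. Then the norm ‖·‖_X is σ(L)-measurable if and only if σ(L) equals the Borel σ-algebra of X. -/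
open MeasurableSpace Metric

theorem norm_measurable_iff_generates_borel
    (X : Type*) [NormedAddCommGroup X] [NormedSpace ℝ X]
    [TopologicalSpace.SeparableSpace X]
    (L : Set (X →L[ℝ] ℝ)) :
    @Measurable X ℝ (⨆ φ ∈ L, MeasurableSpace.comap φ (borel ℝ)) (borel ℝ)
        (fun x => ‖x‖)
      ↔ (⨆ φ ∈ L, MeasurableSpace.comap φ (borel ℝ)) = borel X := by
  haveI : SecondCountableTopology X := UniformSpace.secondCountable_of_separable X
  set m : MeasurableSpace X := ⨆ φ ∈ L, MeasurableSpace.comap φ (borel ℝ) with hm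
  have hbR : borel ℝ = (inferInstance : MeasurableSpace ℝ) :=
    (Real.borelSpace.measurable_eq).symm
  -- σ(L) ≤ borel X
  have hle : m ≤ borel X := by
    refine iSup₂_le fun φ _ => ?_
    rw [hbR]
    letI : MeasurableSpace X := borel X
    haveI : BorelSpace X := ⟨rfl⟩
    exact (φ.continuous.measurable).comap_le
  constructor
  · intro hmeas
    refine le_antisymm hle ?_
    -- translations are m-measurable
    have htrans : ∀ x : X, @Measurable X X m m (fun y => y - x) := by
      intro x
      rw [measurable_iff_comap_le, hm]
      simp only [MeasurableSpace.comap_iSup]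
      refine iSup₂_le fun φ hφ => ?_
      rw [MeasurableSpace.comap_comp]
      have h1 : (φ ∘ fun y => y - x) = (fun t => t - φ x) ∘ φ := by
        funext y; simp [map_sub]
      rw [h1, ← MeasurableSpace.comap_comp]
      have h2 : MeasurableSpace.comap (fun t : ℝ => t - φ x) (borel ℝ) ≤ borel ℝ := by
        rw [hbR]; exact (measurable_id.sub measurable_const).comap_le
      calc MeasurableSpace.comap φ (MeasurableSpace.comap (fun t : ℝ => t - φ x) (borel ℝ))
          ≤ MeasurableSpace.comap φ (borel ℝ) := MeasurableSpace.comap_mono h2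
        _ ≤ m := by
            rw [hm]
            exact le_iSup₂ (f := fun (ψ : X →L[ℝ] ℝ) (_ : ψ ∈ L) =>
              MeasurableSpace.comap ψ (borel ℝ)) φ hφ
    -- balls are m-measurable
    have hball : ∀ (x : X) (r : ℝ), @MeasurableSet X m (Metric.ball x r) := by
      intro x r
      have : Metric.ball x r = (fun y => ‖y - x‖) ⁻¹' Set.Iio r := by
        ext y; simp [Metric.mem_ball, dist_eq_norm]
      rw [this]
      exact (hmeas.comp (htrans x)) (by rw [hbR]; exact measurableSet_Iio)
    -- balls form a topological basis
    have hbasis : TopologicalSpace.IsTopologicalBasis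
        {s : Set X | ∃ x r, s = Metric.ball x r} := by
      refine TopologicalSpace.isTopologicalBasis_of_isOpen_of_nhds ?_ ?_
      · rintro u ⟨x, r, rfl⟩; exact Metric.isOpen_ball
      · intro a u ha hu
        rcases Metric.isOpen_iff.1 hu a ha with ⟨ε, hε, hsub⟩
        exact ⟨Metric.ball a ε, ⟨a, ε, rfl⟩, Metric.mem_ball_self hε, hsub⟩
    rw [hbasis.borel_eq_generateFrom]
    refine MeasurableSpace.generateFrom_le ?_
    rintro s ⟨x, r, rfl⟩
    exact hball x r
  · intro h
    rw [h]
    letI : MeasurableSpace X := borel X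
    haveI : BorelSpace X := ⟨rfl⟩
    rw [hbR]
    exact continuous_norm.measurable
end
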